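/- Let H₁ be a separable Hilbert space and x a square-integrable H₁-valued random variable. Then the following are equivalent: (i) there exists c > 0 such that E[⟨x, f⟩⁴] ≤ c (E[⟨x, f⟩²])² for all f ∈ H₁; (ii) for every separable Hilbert space H there exists c > 0 such that for every compact linear operator A : H₁ → H, E[‖Ax‖⁴] ≤ c (E[‖Ax‖²])². -/

import Mathlib

open MeasureTheory
open scoped RealInnerProductSpace ENNReal

set_option linter.unusedSectionVars false
set_option maxHeartbeats 1000000

section aux
variable {H₁ : Type} [NormedAddCommGroup H₁] [InnerProductSpace ℝ H₁] [CompleteSpace H₁]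
variable {Ω : Type} [MeasurableSpace Ω] {μ : Measure Ω} [IsProbabilityMeasure μ]

lemma integrable_norm_sq_aux (x : Ω → H₁) (hx : AEStronglyMeasurable x μ)
    (hx4 : Integrable (fun ω => ‖x ω‖ ^ 4) μ) :
    Integrable (fun ω => ‖x ω‖ ^ 2) μ := by
  refine Integrable.mono' ((integrable_const (1:ℝ)).add hx4) (hx.norm.pow 2) ?_
  filter_upwards with ω
  rw [Real.norm_eq_abs, abs_of_nonneg (by positivity)]
  simp only [Pi.add_apply]
  nlinarith [sq_nonneg (‖x ω‖^2 - 1), norm_nonneg (x ω)]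

lemma key_aux {H : Type} [NormedAddCommGroup H] [InnerProductSpace ℝ H] [CompleteSpace H]
    [SecondCountableTopology H]
    (x : Ω → H₁) (hx : AEStronglyMeasurable x μ)
    (hx4 : Integrable (fun ω => ‖x ω‖ ^ 4) μ)
    {c : ℝ} (hc : 0 < c)
    (hi : ∀ f : H₁, ∫ ω, ⟪x ω, f⟫ ^ 4 ∂μ ≤ c * (∫ ω, ⟪x ω, f⟫ ^ 2 ∂μ) ^ 2)
    (A : H₁ →L[ℝ] H) :
    ∫ ω, ‖A (x ω)‖ ^ 4 ∂μ ≤ c * (∫ ω, ‖A (x ω)‖ ^ 2 ∂μ) ^ 2 := by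
  classical
  obtain ⟨w, b, hb⟩ := exists_hilbertBasis ℝ H
  -- countability of the Hilbert basis index
  have hwc : w.Countable := by
    have hdist : ∀ i ∈ w, ∀ j ∈ w, i ≠ j → (1:ℝ) ≤ dist i j := by
      intro i hiw j hjw hij
      have horth : Orthonormal ℝ ((↑) : w → H) := hb ▸ b.orthonormal
      have h0 : ⟪i, j⟫ = 0 := horth.2
        (i := (⟨i, hiw⟩ : w)) (j := (⟨j, hjw⟩ : w))
        (fun h => hij (congrArg Subtype.val h))
      have h1 : ‖i‖ = 1 := horth.1 (⟨i, hiw⟩ : w)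
      have h1' : ‖j‖ = 1 := horth.1 (⟨j, hjw⟩ : w)
      have hsq : ‖i - j‖^2 = 2 := by rw [norm_sub_sq_real, h0, h1, h1']; ring
      rw [dist_eq_norm]
      nlinarith [norm_nonneg (i - j)]
    have hpd : w.PairwiseDisjoint (fun h => Metric.ball h (1/2)) := by
      intro i hi' j hj hij
      exact Metric.ball_disjoint_ball (by linarith [hdist i hi' j hj hij])
    exact hpd.countable_of_isOpen (fun i _ => Metric.isOpen_ball)
      (fun i _ => ⟨i, by simp⟩)
  haveI : Countable w := hwc.to_subtype
  set f : w → H₁ := fun i => (ContinuousLinearMap.adjoint A) (b i) with hf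
  set g : w → Ω → ℝ := fun i ω => ⟪x ω, f i⟫ ^ 2 with hg
  have hgnn : ∀ i ω, 0 ≤ g i ω := fun i ω => sq_nonneg _
  have hAx : AEStronglyMeasurable (fun ω => A (x ω)) μ :=
    A.continuous.comp_aestronglyMeasurable hx
  have hxm : ∀ i : w, AEStronglyMeasurable (fun ω => ⟪x ω, f i⟫) μ :=
    fun i => hx.inner aestronglyMeasurable_const
  have hgm : ∀ i, AEStronglyMeasurable (g i) μ := fun i => (hxm i).pow 2
  have hsum : ∀ ω, HasSum (fun i => g i ω) (‖A (x ω)‖ ^ 2) := by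
    intro ω
    have h := b.hasSum_inner_mul_inner (A (x ω)) (A (x ω))
    rw [real_inner_self_eq_norm_sq] at h
    convert h using 2 with i
    · rfl
    show ⟪x ω, (ContinuousLinearMap.adjoint A) (b i)⟫ ^ 2 = _
    rw [ContinuousLinearMap.adjoint_inner_right, pow_two]
    rw [real_inner_comm (A (x ω)) (b i)]
  have hx2 : Integrable (fun ω => ‖x ω‖ ^ 2) μ := integrable_norm_sq_aux x hx hx4
  have hgi : ∀ i, Integrable (g i) μ := by
    intro i
    refine (hx2.const_mul (‖f i‖^2)).mono' (hgm i) ?_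
    filter_upwards with ω
    rw [Real.norm_eq_abs, abs_of_nonneg (hgnn i ω)]
    have h1 : |⟪x ω, f i⟫| ≤ ‖x ω‖ * ‖f i‖ := abs_real_inner_le_norm _ _
    calc g i ω = |⟪x ω, f i⟫|^2 := by rw [sq_abs]
      _ ≤ (‖x ω‖ * ‖f i‖)^2 := pow_le_pow_left₀ (abs_nonneg _) h1 2
      _ = ‖f i‖^2 * ‖x ω‖^2 := by ring
  have hg2i : ∀ i, Integrable (fun ω => (g i ω)^2) μ := by
    intro i
    refine (hx4.const_mul (‖f i‖^4)).mono' ((hgm i).pow 2) ?_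
    filter_upwards with ω
    rw [Real.norm_eq_abs, abs_of_nonneg (pow_nonneg (hgnn i ω) 2)]
    have h1 : |⟪x ω, f i⟫| ≤ ‖x ω‖ * ‖f i‖ := abs_real_inner_le_norm _ _
    calc (g i ω)^2 = |⟪x ω, f i⟫|^4 := by
          simp only [hg]
          rw [pow_abs, abs_of_nonneg (by positivity : (0:ℝ) ≤ ⟪x ω, f i⟫^4)]
          ring
      _ ≤ (‖x ω‖ * ‖f i‖)^4 := pow_le_pow_left₀ (abs_nonneg _) h1 4
      _ = ‖f i‖^4 * ‖x ω‖^4 := by ring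
  have hAx4i : Integrable (fun ω => ‖A (x ω)‖^4) μ := by
    refine (hx4.const_mul (‖A‖^4)).mono' (hAx.norm.pow 4) ?_
    filter_upwards with ω
    rw [Real.norm_eq_abs, abs_of_nonneg (by positivity)]
    calc ‖A (x ω)‖^4 ≤ (‖A‖ * ‖x ω‖)^4 :=
          pow_le_pow_left₀ (norm_nonneg _) (A.le_opNorm _) 4
      _ = ‖A‖^4 * ‖x ω‖^4 := by ring
  have hAx2i : Integrable (fun ω => ‖A (x ω)‖^2) μ := by
    refine (hx2.const_mul (‖A‖^2)).mono' (hAx.norm.pow 2) ?_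
    filter_upwards with ω
    rw [Real.norm_eq_abs, abs_of_nonneg (by positivity)]
    calc ‖A (x ω)‖^2 ≤ (‖A‖ * ‖x ω‖)^2 :=
          pow_le_pow_left₀ (norm_nonneg _) (A.le_opNorm _) 2
      _ = ‖A‖^2 * ‖x ω‖^2 := by ring
  -- ENNReal versions
  set G : w → Ω → ℝ≥0∞ := fun i ω => ENNReal.ofReal (g i ω) with hG
  have hGm : ∀ i, AEMeasurable (G i) μ := fun i =>
    ENNReal.measurable_ofReal.comp_aemeasurable (hgm i).aemeasurable
  have hGsum : ∀ ω, ∑' i, G i ω = ENNReal.ofReal (‖A (x ω)‖^2) := fun ω => by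
    rw [hG, ← ENNReal.ofReal_tsum_of_nonneg (fun i => hgnn i ω) (hsum ω).summable,
      (hsum ω).tsum_eq]
  have hI : ∀ i, ∫⁻ ω, (G i ω)^2 ∂μ ≤ ENNReal.ofReal c * (∫⁻ ω, G i ω ∂μ)^2 := by
    intro i
    have h1 : ∫⁻ ω, G i ω ∂μ = ENNReal.ofReal (∫ ω, g i ω ∂μ) :=
      (ofReal_integral_eq_lintegral_ofReal (hgi i)
        (Filter.Eventually.of_forall (hgnn i))).symm
    have h2' : ∫⁻ ω, (G i ω)^2 ∂μ = ∫⁻ ω, ENNReal.ofReal ((g i ω)^2) ∂μ :=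
      lintegral_congr fun ω => (ENNReal.ofReal_pow (hgnn i ω) 2).symm
    have h2 : ∫⁻ ω, (G i ω)^2 ∂μ = ENNReal.ofReal (∫ ω, (g i ω)^2 ∂μ) := by
      rw [h2', ← ofReal_integral_eq_lintegral_ofReal (hg2i i)
        (Filter.Eventually.of_forall (fun ω => pow_nonneg (hgnn i ω) 2))]
    have h3 : ∫ ω, (g i ω)^2 ∂μ ≤ c * (∫ ω, g i ω ∂μ)^2 := by
      have h := hi (f i)
      have e : (fun ω => (g i ω)^2) = fun ω => ⟪x ω, f i⟫^4 := by
        funext ω; simp only [hg]; ring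
      rw [e]
      exact h
    rw [h1, h2]
    calc ENNReal.ofReal (∫ ω, (g i ω)^2 ∂μ)
        ≤ ENNReal.ofReal (c * (∫ ω, g i ω ∂μ)^2) := ENNReal.ofReal_le_ofReal h3
      _ = ENNReal.ofReal c * (ENNReal.ofReal (∫ ω, g i ω ∂μ))^2 := by
          rw [ENNReal.ofReal_mul hc.le,
            ENNReal.ofReal_pow (integral_nonneg (fun ω => hgnn i ω))]
  -- Hölder / Cauchy-Schwarz step
  have hconj : Real.HolderConjugate 2 2 := Real.HolderConjugate.two_two
  have hpow : ∀ u : Ω → ℝ≥0∞, ∫⁻ ω, u ω ^ (2:ℝ) ∂μ = ∫⁻ ω, (u ω)^2 ∂μ := fun u =>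
    lintegral_congr fun ω => by rw [← ENNReal.rpow_natCast (u ω) 2]; norm_num
  have holder : ∀ i j : w, ∫⁻ ω, G i ω * G j ω ∂μ ≤
      (∫⁻ ω, (G i ω)^2 ∂μ) ^ ((1:ℝ)/2) * (∫⁻ ω, (G j ω)^2 ∂μ) ^ ((1:ℝ)/2) := by
    intro i j
    have h := ENNReal.lintegral_mul_le_Lp_mul_Lq μ hconj (hGm i) (hGm j)
    rw [hpow (G i), hpow (G j)] at h
    simpa [Pi.mul_apply] using h
  have hc0 : ENNReal.ofReal c ≠ 0 := (ENNReal.ofReal_pos.mpr hc).ne'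
  have hsqrt : ∀ i : w, (∫⁻ ω, (G i ω)^2 ∂μ) ^ ((1:ℝ)/2) ≤
      (ENNReal.ofReal c) ^ ((1:ℝ)/2) * ∫⁻ ω, G i ω ∂μ := by
    intro i
    have h := ENNReal.rpow_le_rpow (hI i) (by norm_num : (0:ℝ) ≤ 1/2)
    rw [ENNReal.mul_rpow_of_nonneg _ _ (by norm_num : (0:ℝ) ≤ 1/2)] at h
    have e : ((∫⁻ ω, G i ω ∂μ)^2) ^ ((1:ℝ)/2) = ∫⁻ ω, G i ω ∂μ := by
      rw [← ENNReal.rpow_natCast (∫⁻ ω, G i ω ∂μ) 2, ← ENNReal.rpow_mul]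
      norm_num
    rwa [e] at h
  set I2 : ℝ≥0∞ := ∫⁻ ω, ENNReal.ofReal (‖A (x ω)‖^2) ∂μ with hI2
  have hItot : ∑' i : w, ∫⁻ ω, G i ω ∂μ = I2 := by
    rw [← lintegral_tsum hGm]
    exact lintegral_congr fun ω => by rw [hGsum ω]
  have hLHSpt : ∀ ω, ENNReal.ofReal (‖A (x ω)‖^4) = ∑' i : w, ∑' j : w, G i ω * G j ω := by
    intro ω
    have h4 : (‖A (x ω)‖^4 : ℝ) = ‖A (x ω)‖^2 * ‖A (x ω)‖^2 := by ring
    rw [h4, ENNReal.ofReal_mul (by positivity), ← hGsum ω, ← ENNReal.tsum_mul_right]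
    exact tsum_congr fun i => (ENNReal.tsum_mul_left).symm
  have hLHS : ∫⁻ ω, ENNReal.ofReal (‖A (x ω)‖^4) ∂μ
      = ∑' i : w, ∑' j : w, ∫⁻ ω, G i ω * G j ω ∂μ := by
    rw [lintegral_congr hLHSpt,
      lintegral_tsum (fun i => (AEMeasurable.ennreal_tsum fun j => (hGm i).mul (hGm j) :
        AEMeasurable (fun ω => ∑' j : w, G i ω * G j ω) μ))]
    exact tsum_congr fun i => lintegral_tsum fun j => (hGm i).mul (hGm j)
  set a : w → ℝ≥0∞ := fun i => (ENNReal.ofReal c) ^ ((1:ℝ)/2) * ∫⁻ ω, G i ω ∂μ with ha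
  have main : ∫⁻ ω, ENNReal.ofReal (‖A (x ω)‖^4) ∂μ ≤ ENNReal.ofReal c * I2^2 := by
    rw [hLHS]
    have step : ∀ i j : w, ∫⁻ ω, G i ω * G j ω ∂μ ≤ a i * a j :=
      fun i j => le_trans (holder i j) (mul_le_mul' (hsqrt i) (hsqrt j))
    have hasum : ∑' i : w, a i = (ENNReal.ofReal c) ^ ((1:ℝ)/2) * I2 := by
      rw [ha, ENNReal.tsum_mul_left, hItot]
    calc ∑' i : w, ∑' j : w, ∫⁻ ω, G i ω * G j ω ∂μ
        ≤ ∑' i : w, ∑' j : w, a i * a j :=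
          ENNReal.tsum_le_tsum fun i => ENNReal.tsum_le_tsum fun j => step i j
      _ = ∑' i : w, a i * ∑' j : w, a j := tsum_congr fun i => ENNReal.tsum_mul_left
      _ = (∑' i : w, a i) * ∑' j : w, a j := ENNReal.tsum_mul_right
      _ = ((ENNReal.ofReal c) ^ ((1:ℝ)/2) * I2) * ((ENNReal.ofReal c) ^ ((1:ℝ)/2) * I2) := by
          rw [hasum]
      _ = ENNReal.ofReal c * I2^2 := by
          rw [mul_mul_mul_comm, ← ENNReal.rpow_add _ _ hc0 ENNReal.ofReal_ne_top]
          norm_num [pow_two]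
  have l4 : ∫⁻ ω, ENNReal.ofReal (‖A (x ω)‖^4) ∂μ = ENNReal.ofReal (∫ ω, ‖A (x ω)‖^4 ∂μ) :=
    (ofReal_integral_eq_lintegral_ofReal hAx4i
      (Filter.Eventually.of_forall fun ω => by positivity)).symm
  have l2 : I2 = ENNReal.ofReal (∫ ω, ‖A (x ω)‖^2 ∂μ) :=
    (ofReal_integral_eq_lintegral_ofReal hAx2i
      (Filter.Eventually.of_forall fun ω => by positivity)).symm
  rw [l4, l2] at main
  have hR : ENNReal.ofReal c * (ENNReal.ofReal (∫ ω, ‖A (x ω)‖^2 ∂μ))^2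
      = ENNReal.ofReal (c * (∫ ω, ‖A (x ω)‖^2 ∂μ)^2) := by
    rw [ENNReal.ofReal_mul hc.le, ENNReal.ofReal_pow (integral_nonneg fun ω => by positivity)]
  rw [hR] at main
  exact (ENNReal.ofReal_le_ofReal_iff (mul_nonneg hc.le (sq_nonneg _))).mp main
end aux

/-- for a square(-fourth)-integrable Hilbert-space-valued random variable `x`,
the fourth-moment condition on linear functionals is equivalent to the fourth-moment
condition on images under compact linear operators into arbitrary separable Hilbert spaces. -/
theorem stmt_3 {H₁ : Type} [NormedAddCommGroup H₁] [InnerProductSpace ℝ H₁] [CompleteSpace H₁]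
    [SecondCountableTopology H₁]
    {Ω : Type} [MeasurableSpace Ω] (μ : Measure Ω) [IsProbabilityMeasure μ]
    (x : Ω → H₁) (hx : AEStronglyMeasurable x μ)
    (hx4 : Integrable (fun ω => ‖x ω‖ ^ 4) μ) :
    (∃ c > (0 : ℝ), ∀ f : H₁,
        ∫ ω, ⟪x ω, f⟫ ^ 4 ∂μ ≤ c * (∫ ω, ⟪x ω, f⟫ ^ 2 ∂μ) ^ 2) ↔
      (∀ (H : Type) (_ : NormedAddCommGroup H), ∀ (_ : InnerProductSpace ℝ H),
        ∀ (_ : CompleteSpace H) (_ : SecondCountableTopology H),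
        ∃ c > (0 : ℝ), ∀ A : H₁ →L[ℝ] H, IsCompactOperator (⇑A) →
          ∫ ω, ‖A (x ω)‖ ^ 4 ∂μ ≤ c * (∫ ω, ‖A (x ω)‖ ^ 2 ∂μ) ^ 2) := by
  constructor
  · rintro ⟨c, hc, hi⟩ H _ _ _ _
    exact ⟨c, hc, fun A _ => key_aux x hx hx4 hc hi A⟩
  · intro h
    obtain ⟨c, hc, hA⟩ := h ℝ inferInstance inferInstance inferInstance inferInstance
    refine ⟨c, hc, fun f => ?_⟩
    have hcpt : IsCompactOperator (⇑(innerSL ℝ f)) := by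
      refine ⟨Metric.closedBall 0 ‖f‖, isCompact_closedBall 0 ‖f‖, ?_⟩
      refine Filter.mem_of_superset (Metric.closedBall_mem_nhds 0 one_pos) ?_
      intro y hy
      simp only [Set.mem_preimage, Metric.mem_closedBall, dist_zero_right] at *
      calc ‖(innerSL ℝ f) y‖ = |⟪f, y⟫| := by rw [innerSL_apply_apply, Real.norm_eq_abs]
        _ ≤ ‖f‖ * ‖y‖ := abs_real_inner_le_norm f y
        _ ≤ ‖f‖ * 1 := mul_le_mul_of_nonneg_left hy (norm_nonneg f)
        _ = ‖f‖ := mul_one _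
    have key := hA (innerSL ℝ f) hcpt
    have e4 : ∀ ω, ‖(innerSL ℝ f) (x ω)‖^4 = ⟪x ω, f⟫^4 := by
      intro ω
      rw [innerSL_apply_apply, Real.norm_eq_abs, pow_abs,
        abs_of_nonneg (by positivity : (0:ℝ) ≤ ⟪f, x ω⟫^4), real_inner_comm f (x ω)]
    have e2 : ∀ ω, ‖(innerSL ℝ f) (x ω)‖^2 = ⟪x ω, f⟫^2 := by
      intro ω
      rw [innerSL_apply_apply, Real.norm_eq_abs, pow_abs,
        abs_of_nonneg (by positivity : (0:ℝ) ≤ ⟪f, x ω⟫^2), real_inner_comm f (x ω)]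
    rw [integral_congr_ae (Filter.Eventually.of_forall e4),
      integral_congr_ae (Filter.Eventually.of_forall e2)] at key
    exact key
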